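/- Let K be a finite field with s elements, V = Fin (d+1) → K, and 0 ≤ l < m ≤ d. For every K-subspace W of V with finrank W = m+1 (an m-dimensional projective subspace of P(d, K)), the number of K-subspaces U of V with finrank U = l+1 and U ≤ W equals φ(m, l, s); equivalently, that count multiplied by ∏_{i=0}^{l} (s^{i+1} − 1) equals ∏_{i=0}^{l} (s^{m+1−i} − 1). -/

import Mathlib

open Module

theorem count_subspaces (K V : Type*) [Field K] [AddCommGroup V] [Module K V]
    [Fintype K] [Finite V] (k : ℕ) (hk : k ≤ finrank K V) :
    Nat.card {U : Submodule K V // finrank K U = k} *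
      ∏ i ∈ Finset.range k, (Fintype.card K ^ k - Fintype.card K ^ i) =
    ∏ i ∈ Finset.range k, (Fintype.card K ^ (finrank K V) - Fintype.card K ^ i) := by
  classical
  set q := Fintype.card K
  let f : {s : Fin k → V // LinearIndependent K s} → {U : Submodule K V // finrank K U = k} :=
    fun s => ⟨Submodule.span K (Set.range s.1), by
      rw [finrank_span_eq_card s.2, Fintype.card_fin]⟩
  have hfiber : ∀ U : {U : Submodule K V // finrank K U = k},
      Nat.card {s // f s = U} = ∏ i ∈ Finset.range k, (q ^ k - q ^ i) := by
    intro U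
    have e : {s // f s = U} ≃ {s : Fin k → U.1 // LinearIndependent K s} := by
      refine ⟨fun s => ⟨fun i => ⟨s.1.1 i, ?_⟩, ?_⟩, fun t =>
        ⟨⟨fun i => (t.1 i : V), ?_⟩, ?_⟩, ?_, ?_⟩
      · have := congrArg Subtype.val s.2
        simp only [f] at this
        rw [← this]
        exact Submodule.subset_span ⟨i, rfl⟩
      · have h := s.1.2
        exact ((U.1.subtype).linearIndependent_iff (Submodule.ker_subtype _)).mp
          (by exact h)
      · exact ((U.1.subtype).linearIndependent_iff (Submodule.ker_subtype _)).mpr t.2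
      · have hle : Submodule.span K (Set.range fun i => ((t.1 i : V))) ≤ U.1 := by
          rw [Submodule.span_le]
          rintro x ⟨i, rfl⟩
          exact (t.1 i).2
        have hli : LinearIndependent K fun i => ((t.1 i : V)) :=
          ((U.1.subtype).linearIndependent_iff (Submodule.ker_subtype _)).mpr t.2
        have : Submodule.span K (Set.range fun i => ((t.1 i : V))) = U.1 := by
          apply Submodule.eq_of_le_of_finrank_le hle
          rw [finrank_span_eq_card hli, Fintype.card_fin, U.2]
        exact Subtype.ext this
      · intro s; ext i <;> rfl
      · intro t; ext i; rfl
    rw [Nat.card_congr e]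
    have hU : finrank K U.1 = k := U.2
    have := card_linearIndependent (K := K) (V := U.1) (k := k) (by rw [hU])
    rw [this, hU, ← Finset.prod_range fun i => q ^ k - q ^ i]
  have key : Nat.card {s : Fin k → V // LinearIndependent K s} =
      Nat.card {U : Submodule K V // finrank K U = k} *
        ∏ i ∈ Finset.range k, (q ^ k - q ^ i) := by
    rw [Nat.card_congr (Equiv.sigmaFiberEquiv f).symm]
    haveI : Fintype {U : Submodule K V // finrank K U = k} := Fintype.ofFinite _
    haveI : ∀ U : {U : Submodule K V // finrank K U = k}, Fintype {s // f s = U} :=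
      fun U => Fintype.ofFinite _
    rw [Nat.card_eq_fintype_card, Fintype.card_sigma]
    have : ∀ U : {U : Submodule K V // finrank K U = k},
        Fintype.card {s // f s = U} = ∏ i ∈ Finset.range k, (q ^ k - q ^ i) := by
      intro U; rw [← Nat.card_eq_fintype_card, hfiber U]
    rw [Finset.sum_congr rfl (fun U _ => this U), Finset.sum_const, Finset.card_univ,
      smul_eq_mul, Nat.card_eq_fintype_card]
  rw [← key, card_linearIndependent hk, ← Finset.prod_range fun i => q ^ finrank K V - q ^ i]


set_option synthInstance.maxHeartbeats 800000 in
/-- For every `m`-dimensional projective subspace `W` of `P(d, K)` (a `K`-subspace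
of `V = Fin (d+1) → K` of finrank `m+1`), the number of `l`-dimensional projective
subspaces `U` contained in `W` (finrank `l+1`, `U ≤ W`) equals `φ(m, l, s)`;
equivalently, that count multiplied by `∏_{i=0}^{l} (s^(i+1) − 1)` equals
`∏_{i=0}^{l} (s^(m+1−i) − 1)`.  Here `s = |K|`. -/
theorem card_subspaces_contained (K : Type*) [Field K] [Fintype K]
    (s d l m : ℕ) (hs : Fintype.card K = s) (hlm : l < m) (hmd : m ≤ d)
    (W : Submodule K (Fin (d + 1) → K)) (hW : Module.finrank K W = m + 1) :
    Nat.card {U : Submodule K (Fin (d + 1) → K) //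
          Module.finrank K U = l + 1 ∧ U ≤ W} *
        ∏ i ∈ Finset.range (l + 1), (s ^ (i + 1) - 1) =
      ∏ i ∈ Finset.range (l + 1), (s ^ (m + 1 - i) - 1) ∧
    Nat.card {U : Submodule K (Fin (d + 1) → K) //
        Module.finrank K U = l + 1 ∧ U ≤ W} =
      (∏ i ∈ Finset.range (l + 1), (s ^ (m + 1 - i) - 1)) /
        ∏ i ∈ Finset.range (l + 1), (s ^ (i + 1) - 1) := by
  subst hs
  set q := Fintype.card K with hq
  have hq2 : 2 ≤ q := Fintype.one_lt_card
  -- transfer to subspaces of W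
  have ecard : Nat.card {U : Submodule K (Fin (d + 1) → K) //
        Module.finrank K U = l + 1 ∧ U ≤ W} =
      Nat.card {U : Submodule K W // Module.finrank K U = l + 1} := by
    refine Nat.card_congr (Equiv.symm ⟨fun U' => ⟨U'.1.map W.subtype, ?_, Submodule.map_subtype_le _ _⟩,
      fun U => ⟨U.1.comap W.subtype, ?_⟩, ?_, ?_⟩)
    · rw [Submodule.finrank_map_subtype_eq]; exact U'.2
    · rw [(Submodule.comapSubtypeEquivOfLe U.2.2).finrank_eq]; exact U.2.1
    · intro U'
      apply Subtype.ext
      simp only [Submodule.comap_map_eq, Submodule.ker_subtype, sup_bot_eq]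
    · intro U
      apply Subtype.ext
      simp only [Submodule.map_comap_subtype]
      exact inf_eq_right.mpr U.2.2
  have hkey := count_subspaces K W (l + 1) (by rw [hW]; omega)
  rw [hW, ← hq] at hkey
  -- rewrite products
  have hsum : ∀ a : ℕ, l + 1 ≤ a →
      ∏ i ∈ Finset.range (l + 1), (q ^ a - q ^ i) =
        q ^ (∑ i ∈ Finset.range (l + 1), i) *
          ∏ i ∈ Finset.range (l + 1), (q ^ (a - i) - 1) := by
    intro a ha
    rw [← Finset.prod_pow_eq_pow_sum, ← Finset.prod_mul_distrib]
    refine Finset.prod_congr rfl fun i hi => ?_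
    have hi' : i ≤ a := by simp at hi; omega
    rw [Nat.mul_sub_one, ← pow_add, Nat.add_sub_cancel' hi']
  have hA : ∏ i ∈ Finset.range (l + 1), (q ^ (l + 1 - i) - 1) =
      ∏ i ∈ Finset.range (l + 1), (q ^ (i + 1) - 1) := by
    rw [← Finset.prod_range_reflect (fun j => q ^ (j + 1) - 1) (l + 1)]
    refine Finset.prod_congr rfl fun i hi => ?_
    simp only [Finset.mem_range] at hi
    congr 2
    omega
  rw [hsum _ (by omega), hsum _ (by omega), ← mul_assoc, mul_comm _ (q ^ _), mul_assoc,
    hA] at hkey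
  have hmain : Nat.card {U : Submodule K (Fin (d + 1) → K) //
        Module.finrank K U = l + 1 ∧ U ≤ W} *
      ∏ i ∈ Finset.range (l + 1), (q ^ (i + 1) - 1) =
      ∏ i ∈ Finset.range (l + 1), (q ^ (m + 1 - i) - 1) := by
    rw [ecard]
    exact Nat.eq_of_mul_eq_mul_left (pow_pos Fintype.card_pos _) hkey
  refine ⟨hmain, ?_⟩
  have hApos : 0 < ∏ i ∈ Finset.range (l + 1), (q ^ (i + 1) - 1) := by
    apply Finset.prod_pos
    intro i _
    have : 1 < q ^ (i + 1) := Nat.one_lt_pow (by omega) hq2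
    omega
  rw [← hmain, Nat.mul_div_cancel _ hApos]
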